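/- Let f : ℝ → ℝ satisfy f(0) = 0 and be differentiable everywhere with f'(t) = (1 + 2 f(t)²)^{-1/2} for all t ∈ ℝ. Then for every t ∈ ℝ one has (1/2) f(t)² ≤ f(t) · t · (1 + 2 f(t)²)^{-1/2} ≤ f(t)², i.e., (1/2) f(t)² ≤ f(t) f'(t) t ≤ f(t)². -/

import Mathlib

/-- Lemma 2.1 (5): `(1/2) f(t)² ≤ f(t) f'(t) t ≤ f(t)²` for all `t`,
where `f'(t) = (1 + 2 f(t)²)^(-1/2)`. -/
theorem dual_change_of_variables_ffprime (f : ℝ → ℝ)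
    (hf0 : f 0 = 0)
    (hf : ∀ t : ℝ, HasDerivAt f ((1 + 2 * (f t) ^ 2) ^ (-(1 / 2 : ℝ))) t) :
    ∀ t : ℝ,
      (1 / 2) * (f t) ^ 2 ≤ f t * t * (1 + 2 * (f t) ^ 2) ^ (-(1 / 2 : ℝ)) ∧
      f t * t * (1 + 2 * (f t) ^ 2) ^ (-(1 / 2 : ℝ)) ≤ (f t) ^ 2 := by
  have hcpos : ∀ s : ℝ, (0:ℝ) < 1 + 2 * f s ^ 2 := fun s => by positivity
  set S : ℝ → ℝ := fun s => Real.sqrt (1 + 2 * f s ^ 2) with hS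
  have hSpos : ∀ s, 0 < S s := fun s => Real.sqrt_pos.2 (hcpos s)
  have hSsq : ∀ s, S s ^ 2 = 1 + 2 * f s ^ 2 := fun s => Real.sq_sqrt (hcpos s).le
  have hrw : ∀ s, (1 + 2 * f s ^ 2) ^ (-(1/2 : ℝ)) = (S s)⁻¹ := by
    intro s
    rw [Real.rpow_neg (hcpos s).le, ← Real.sqrt_eq_rpow]
  have hf' : ∀ s, HasDerivAt f (S s)⁻¹ s := fun s => (hrw s) ▸ hf s
  -- derivative of c := 1 + 2 f^2
  have hc' : ∀ s, HasDerivAt (fun u => 1 + 2 * f u ^ 2) (2 * (2 * f s ^ 1 * (S s)⁻¹)) s := by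
    intro s
    exact (((hf' s).pow 2).const_mul 2).const_add 1
  -- derivative of g := f * S
  have hg : ∀ s, HasDerivAt (fun u => f u * S u)
      ((S s)⁻¹ * S s + f s * (2 * (2 * f s ^ 1 * (S s)⁻¹) / (2 * S s))) s := by
    intro s
    exact (hf' s).mul ((hc' s).sqrt (hcpos s).ne')
  have hGval : ∀ s, (S s)⁻¹ * S s + f s * (2 * (2 * f s ^ 1 * (S s)⁻¹) / (2 * S s))
      = 1 + 2 * f s ^ 2 / (1 + 2 * f s ^ 2) := by
    intro s
    have h1 : (S s)⁻¹ * S s = 1 := inv_mul_cancel₀ (hSpos s).ne'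
    have h2 := hSsq s
    have hne := (hSpos s).ne'
    field_simp
    nlinarith [hSpos s, h2]
  -- monotone facts
  have hmonf : Monotone f := by
    apply monotone_of_deriv_nonneg (fun s => (hf' s).differentiableAt)
    intro s
    rw [(hf' s).deriv]
    positivity
  have hmon1 : Monotone (fun u => f u * S u - u) := by
    apply monotone_of_deriv_nonneg
    · intro s
      exact ((hg s).sub (hasDerivAt_id s)).differentiableAt
    · intro s
      have hD : HasDerivAt (fun u => f u * S u - u)
          ((S s)⁻¹ * S s + f s * (2 * (2 * f s ^ 1 * (S s)⁻¹) / (2 * S s)) - 1) s :=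
        (hg s).sub (hasDerivAt_id s)
      rw [hD.deriv, hGval s]
      have h := hcpos s
      have : 0 ≤ 2 * f s ^ 2 / (1 + 2 * f s ^ 2) := by positivity
      linarith
  have hmon2 : Monotone (fun u => u - f u * S u / 2) := by
    apply monotone_of_deriv_nonneg
    · intro s
      exact ((hasDerivAt_id s).sub ((hg s).div_const 2)).differentiableAt
    · intro s
      have hD : HasDerivAt (fun u => u - f u * S u / 2)
          (1 - ((S s)⁻¹ * S s + f s * (2 * (2 * f s ^ 1 * (S s)⁻¹) / (2 * S s))) / 2) s :=
        (hasDerivAt_id s).sub ((hg s).div_const 2)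
      rw [hD.deriv, hGval s]
      have h := hcpos s
      have : 2 * f s ^ 2 / (1 + 2 * f s ^ 2) ≤ 1 := by
        rw [div_le_one h]; linarith
      linarith
  have hS0 : f 0 * S 0 - 0 = 0 := by rw [hf0]; ring
  intro t
  rw [hrw t]
  have hinv : (0:ℝ) < (S t)⁻¹ := inv_pos.2 (hSpos t)
  have hSi : S t * (S t)⁻¹ = 1 := mul_inv_cancel₀ (hSpos t).ne'
  rcases le_total 0 t with ht | ht
  · have hft : 0 ≤ f t := hf0 ▸ hmonf ht
    have h1 : t ≤ f t * S t := by have := hmon1 ht; simp [hf0] at this; linarith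
    have h2 : f t * S t / 2 ≤ t := by have := hmon2 ht; simp [hf0] at this; linarith
    constructor
    · have A : f t ^ 2 * S t / 2 ≤ f t * t := by nlinarith [mul_le_mul_of_nonneg_left h2 hft]
      have B := mul_le_mul_of_nonneg_right A hinv.le
      have C : f t ^ 2 * S t / 2 * (S t)⁻¹ = 1/2 * f t ^ 2 := by
        rw [div_mul_eq_mul_div, mul_assoc, hSi]
        ring
      linarith
    · have A : f t * t ≤ f t ^ 2 * S t := by nlinarith [mul_le_mul_of_nonneg_left h1 hft]
      have B := mul_le_mul_of_nonneg_right A hinv.le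
      have C : f t ^ 2 * S t * (S t)⁻¹ = f t ^ 2 := by rw [mul_assoc, hSi, mul_one]
      linarith
  · have hft : f t ≤ 0 := hf0 ▸ hmonf ht
    have h1 : f t * S t ≤ t := by have := hmon1 ht; simp [hf0] at this; linarith
    have h2 : t ≤ f t * S t / 2 := by have := hmon2 ht; simp [hf0] at this; linarith
    constructor
    · have A : f t ^ 2 * S t / 2 ≤ f t * t := by nlinarith [mul_le_mul_of_nonpos_left h2 hft]
      have B := mul_le_mul_of_nonneg_right A hinv.le
      have C : f t ^ 2 * S t / 2 * (S t)⁻¹ = 1/2 * f t ^ 2 := by rw [div_mul_eq_mul_div, mul_assoc, hSi]; ring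
      linarith
    · have A : f t * t ≤ f t ^ 2 * S t := by nlinarith [mul_le_mul_of_nonpos_left h1 hft]
      have B := mul_le_mul_of_nonneg_right A hinv.le
      have C : f t ^ 2 * S t * (S t)⁻¹ = f t ^ 2 := by rw [mul_assoc, hSi, mul_one]
      linarith
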